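/- Let L be a full-rank lattice in R^d with successive minima λ_1 ≤ ... ≤ λ_d with respect to the Euclidean ball. Then every ball in R^d that contains no point of L in its interior has radius R satisfying R^2 ≤ (1/4)(λ_1^2 + ... + λ_d^2). -/

import Mathlib

open RealInnerProductSpace

open Finset in
/-- Pythagoras for the orthogonal projection. -/
theorem pyth_aux {E : Type*} [NormedAddCommGroup E] [InnerProductSpace ℝ E]
    (H : Submodule ℝ E) [Submodule.HasOrthogonalProjection H] (x q : E) (hq : q ∈ H) :
    ‖x - q‖ ^ 2 = ‖x - Submodule.orthogonalProjectionOnto H x‖ ^ 2 +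
      ‖(Submodule.orthogonalProjectionOnto H x : E) - q‖ ^ 2 := by
  have h1 : x - q = (x - Submodule.orthogonalProjectionOnto H x) + ((Submodule.orthogonalProjectionOnto H x : E) - q) := by
    abel
  have h2 : (inner ℝ (x - (Submodule.orthogonalProjectionOnto H x : E))
      ((Submodule.orthogonalProjectionOnto H x : E) - q) : ℝ) = 0 := by
    have hm := Submodule.sub_starProjection_mem_orthogonal (K := H) x
    exact (Submodule.mem_orthogonal' H _).1 hm _
      (Submodule.sub_mem H (Submodule.orthogonalProjectionOnto H x).2 hq)
  rw [h1, norm_add_sq_real, h2]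
  ring

/-- Any point of the real span of `v` is within squared distance `(1/4) ∑ ‖v i‖²` of the
integer span of `v`. -/
theorem approx_aux {E : Type*} [NormedAddCommGroup E] [InnerProductSpace ℝ E] :
    ∀ (n : ℕ) (v : Fin n → E) (x : E), x ∈ Submodule.span ℝ (Set.range v) →
      ∃ y ∈ Submodule.span ℤ (Set.range v), ‖x - y‖ ^ 2 ≤ (1 / 4) * ∑ i, ‖v i‖ ^ 2 := by
  intro n
  induction n with
  | zero =>
    intro v x hx
    refine ⟨0, Submodule.zero_mem _, ?_⟩
    have he : Set.range v = (∅ : Set E) := Set.range_eq_empty v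
    rw [he, Submodule.span_empty, Submodule.mem_bot] at hx
    simp [hx]
  | succ n ih =>
    intro v x hx
    set u : Fin n → E := Fin.tail v with hu
    set H : Submodule ℝ E := Submodule.span ℝ (Set.range u) with hH
    haveI : FiniteDimensional ℝ H := FiniteDimensional.span_of_finite ℝ (Set.finite_range u)
    rw [Fin.range_fin_succ, Submodule.span_insert] at hx
    obtain ⟨a, ha, h, hh, rfl⟩ := Submodule.mem_sup.1 hx
    obtain ⟨t, rfl⟩ := Submodule.mem_span_singleton.1 ha
    set m : ℤ := round t with hm
    set x' : E := (t - (m : ℝ)) • v 0 + h with hx'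
    have hPmem : (Submodule.orthogonalProjectionOnto H x' : E) ∈ Submodule.span ℝ (Set.range u) :=
      (Submodule.orthogonalProjectionOnto H x').2
    obtain ⟨y, hy, hyb⟩ := ih u (Submodule.orthogonalProjectionOnto H x') hPmem
    have hyH : y ∈ H := by
      have hle : Submodule.span ℤ (Set.range u) ≤ H.restrictScalars ℤ :=
        Submodule.span_le.2 Submodule.subset_span
      exact hle hy
    refine ⟨m • v 0 + y, ?_, ?_⟩
    · exact Submodule.add_mem _
        (Submodule.smul_mem _ m (Submodule.subset_span ⟨0, rfl⟩))
        (Submodule.span_mono (by rintro z ⟨i, rfl⟩; exact ⟨i.succ, rfl⟩) hy)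
    · have hz : t • v 0 + h - (m • v 0 + y) = x' - y := by
        rw [hx', ← Int.cast_smul_eq_zsmul ℝ m (v 0), sub_smul]
        abel
      rw [hz, pyth_aux H x' y hyH]
      have hb1 : ‖x' - (Submodule.orthogonalProjectionOnto H x' : E)‖ ^ 2 ≤ (1 / 4) * ‖v 0‖ ^ 2 := by
        have h2 : ‖x' - h‖ ^ 2 = ‖x' - (Submodule.orthogonalProjectionOnto H x' : E)‖ ^ 2 +
            ‖(Submodule.orthogonalProjectionOnto H x' : E) - h‖ ^ 2 := pyth_aux H x' h hh
        have h3 : ‖x' - h‖ ≤ (1 / 2) * ‖v 0‖ := by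
          have : x' - h = (t - (m : ℝ)) • v 0 := by rw [hx']; abel
          rw [this, norm_smul, Real.norm_eq_abs]
          have := abs_sub_round t
          nlinarith [norm_nonneg (v 0), abs_nonneg (t - (m : ℝ))]
        nlinarith [sq_nonneg ‖(Submodule.orthogonalProjectionOnto H x' : E) - h‖, norm_nonneg (x' - h),
          norm_nonneg (v 0), sq_nonneg ‖v 0‖]
      have hsum : ∑ i, ‖v i‖ ^ 2 = ‖v 0‖ ^ 2 + ∑ i : Fin n, ‖u i‖ ^ 2 := by
        rw [Fin.sum_univ_succ]; rfl
      rw [hsum]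
      linarith

/-- The radius of any lattice-point-free open ball of a full-rank lattice `L` in `ℝ^d`
satisfies `R² ≤ (1/4) ∑ λᵢ²`, where the `λᵢ` are the successive minima of `L` with
respect to the Euclidean unit ball. -/
theorem lattice_free_ball_radius_bound (d : ℕ)
    (b : Module.Basis (Fin d) ℝ (EuclideanSpace ℝ (Fin d)))
    (L : Submodule ℤ (EuclideanSpace ℝ (Fin d)))
    (hL : L = Submodule.span ℤ (Set.range ⇑b))
    (lam : Fin d → ℝ)
    (hlam : ∀ i : Fin d, IsLeast {r : ℝ | 0 < r ∧
      ∃ w : Fin (i.val + 1) → EuclideanSpace ℝ (Fin d),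
        (∀ j, w j ∈ L) ∧ LinearIndependent ℝ w ∧ ∀ j, ‖w j‖ ≤ r} (lam i))
    (c : EuclideanSpace ℝ (Fin d)) (R : ℝ) (hR : 0 < R)
    (hfree : ∀ p ∈ L, p ∉ Metric.ball c R) :
    R ^ 2 ≤ (1 / 4) * ∑ i, (lam i) ^ 2 := by
  classical
  -- Extract linearly independent lattice vectors with `‖v i‖ ≤ lam i`.
  have extract : ∀ k : ℕ, ∀ hk : k ≤ d, ∃ v : Fin k → EuclideanSpace ℝ (Fin d),
      (∀ j, v j ∈ L) ∧ LinearIndependent ℝ v ∧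
        ∀ j : Fin k, ‖v j‖ ≤ lam (Fin.castLE hk j) := by
    intro k
    induction k with
    | zero =>
      intro _
      exact ⟨Fin.elim0, fun j => j.elim0, linearIndependent_empty_type, fun j => j.elim0⟩
    | succ k ih =>
      intro hk
      obtain ⟨v, hvL, hvli, hvn⟩ := ih (le_of_lt (Nat.lt_of_succ_le hk))
      set i : Fin d := ⟨k, Nat.lt_of_succ_le hk⟩ with hi
      obtain ⟨hpos, w, hwL, hwli, hwn⟩ := (hlam i).1
      -- some `w j` lies outside the span of `v`
      have hex : ∃ j, w j ∉ Submodule.span ℝ (Set.range v) := by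
        by_contra hcon
        push_neg at hcon
        have hle : Submodule.span ℝ (Set.range w) ≤ Submodule.span ℝ (Set.range v) :=
          Submodule.span_le.2 (by rintro z ⟨j, rfl⟩; exact hcon j)
        have h1 : Module.finrank ℝ (Submodule.span ℝ (Set.range w)) = k + 1 := by
          rw [finrank_span_eq_card hwli, Fintype.card_fin]
        have h2 : Module.finrank ℝ (Submodule.span ℝ (Set.range v)) = k := by
          rw [finrank_span_eq_card hvli, Fintype.card_fin]
        have h3 := Submodule.finrank_mono hle
        have h4 : (i : ℕ) = k := rfl
        rw [h1, h2] at h3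
        omega
      obtain ⟨j, hj⟩ := hex
      refine ⟨Fin.snoc v (w j), ?_, ?_, ?_⟩
      · intro j'
        refine Fin.lastCases ?_ ?_ j'
        · simpa using hwL j
        · intro j''; simpa using hvL j''
      · exact linearIndependent_fin_snoc.2 ⟨hvli, hj⟩
      · intro j'
        refine Fin.lastCases ?_ ?_ j'
        · have : Fin.castLE hk (Fin.last k) = i := by ext; rfl
          simpa [this] using hwn j
        · intro j''
          have : Fin.castLE hk (Fin.castSucc j'') =
              Fin.castLE (le_of_lt (Nat.lt_of_succ_le hk)) j'' := by ext; rfl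
          simpa [this] using hvn j''
  obtain ⟨v, hvL, hvli, hvn⟩ := extract d le_rfl
  have hspan : Submodule.span ℝ (Set.range v) = ⊤ := by
    apply Submodule.eq_top_of_finrank_eq
    rw [finrank_span_eq_card hvli, Fintype.card_fin, finrank_euclideanSpace_fin]
  obtain ⟨y, hy, hyb⟩ := approx_aux d v c (by rw [hspan]; trivial)
  have hyL : y ∈ L := Submodule.span_le.2 (by rintro z ⟨j, rfl⟩; exact hvL j) hy
  have hRy : R ≤ ‖c - y‖ := by
    have := hfree y hyL
    rw [Metric.mem_ball, dist_comm, dist_eq_norm] at this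
    linarith [not_lt.1 this]
  have hsum : ∑ i, ‖v i‖ ^ 2 ≤ ∑ i, (lam i) ^ 2 := by
    apply Finset.sum_le_sum
    intro i _
    have h1 := hvn i
    have h2 : Fin.castLE le_rfl i = i := by ext; rfl
    rw [h2] at h1
    nlinarith [norm_nonneg (v i), (hlam i).1.1]
  nlinarith [norm_nonneg (c - y)]
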